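/- In the torus example X = 𝕋 ∪ H, every surjective isometry φ of (X, d) is of one of the following two forms for some a ∈ ℝ: either φ(y) = g(a) + y for y ∈ 𝕋 and φ(g(t), t) = (g(t + a), t + a) on H, or φ(y) = g(2a) − y for y ∈ 𝕋 and φ(g(t), t) = (g(2a − t), 2a − t) on H. -/

import Mathlib

/-- The distance of the Z-construction on the disjoint union `Y ⊕ (Y × ℝ)`. -/
noncomputable def zdist {Y : Type*} [MetricSpace Y] (R M : ℝ) :
    Y ⊕ Y × ℝ → Y ⊕ Y × ℝ → ℝ
  | Sum.inl y₁, Sum.inl y₂ => dist y₁ y₂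
  | Sum.inl y₁, Sum.inr q => dist y₁ q.1 + R
  | Sum.inr p, Sum.inl y₂ => dist p.1 y₂ + R
  | Sum.inr p, Sum.inr q => dist p.1 q.1 + min |p.2 - q.2| M

/-- The 2-torus `𝕋 = AddCircle 1 × AddCircle 1` with the product (max) metric. -/
abbrev T2 : Type := AddCircle (1 : ℝ) × AddCircle (1 : ℝ)

/-- The dense one-parameter subgroup `g(t) = (t mod 1, αt mod 1)` of the torus. -/
noncomputable def torusFlow (α : ℝ) (t : ℝ) : T2 :=
  ((t : AddCircle (1 : ℝ)), ((α * t : ℝ) : AddCircle (1 : ℝ)))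

/-- The space `X = 𝕋 ∪ H` where `H = {(g(t), t) : t ∈ ℝ}`, as a subset of
`Z = 𝕋 ⊕ (𝕋 × ℝ)`. -/
def torusX (α : ℝ) : Set (T2 ⊕ T2 × ℝ) :=
  {z | ∃ y : T2, z = Sum.inl y} ∪ {z | ∃ t : ℝ, z = Sum.inr (torusFlow α t, t)}

theorem memT (α : ℝ) (y : T2) : (Sum.inl y : T2 ⊕ T2 × ℝ) ∈ torusX α :=
  Or.inl ⟨y, rfl⟩

theorem memH (α : ℝ) (t : ℝ) :
    (Sum.inr (torusFlow α t, t) : T2 ⊕ T2 × ℝ) ∈ torusX α :=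
  Or.inr ⟨t, rfl⟩

section zdistEq

variable {Y : Type*} [MetricSpace Y] (R M : ℝ)

@[simp] lemma zdist_ll (y₁ y₂ : Y) : zdist R M (Sum.inl y₁) (Sum.inl y₂) = dist y₁ y₂ := rfl
@[simp] lemma zdist_lr (y₁ : Y) (q : Y × ℝ) :
    zdist R M (Sum.inl y₁) (Sum.inr q) = dist y₁ q.1 + R := rfl
@[simp] lemma zdist_rl (p : Y × ℝ) (y₂ : Y) :
    zdist R M (Sum.inr p) (Sum.inl y₂) = dist p.1 y₂ + R := rfl
@[simp] lemma zdist_rr (p q : Y × ℝ) :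
    zdist R M (Sum.inr p) (Sum.inr q) = dist p.1 q.1 + min |p.2 - q.2| M := rfl

end zdistEq

namespace TorusAux

lemma norm_coe_le (x : ℝ) : ‖(x : AddCircle (1:ℝ))‖ ≤ |x| := by
  rw [AddCircle.norm_eq]; simpa using round_le x 0

lemma dist_coe_le (a b : ℝ) : dist (a : AddCircle (1:ℝ)) (b : AddCircle (1:ℝ)) ≤ |a - b| := by
  rw [dist_eq_norm, ← AddCircle.coe_sub]; exact norm_coe_le _

lemma circle_dist_le (x y : AddCircle (1:ℝ)) : dist x y ≤ 1/2 := by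
  rw [dist_eq_norm]
  simpa using AddCircle.norm_le_half_period (p := (1:ℝ)) (x := x - y) one_ne_zero

lemma T2_dist_le_half (y z : T2) : dist y z ≤ 1/2 := by
  rw [Prod.dist_eq]
  exact max_le (circle_dist_le _ _) (circle_dist_le _ _)

lemma coe_add_int (x : ℝ) (n : ℤ) : ((x + n : ℝ) : AddCircle (1:ℝ)) = (x : AddCircle (1:ℝ)) := by
  have : ((x + n) - x) ∈ AddSubgroup.zmultiples (1:ℝ) := by
    simpa using AddSubgroup.intCast_mem_zmultiples_one (R := ℝ) n
  exact (QuotientAddGroup.eq_iff_sub_mem).mpr this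

lemma flow_add (α a s : ℝ) : torusFlow α (a + s) = torusFlow α a + torusFlow α s := by
  have h1 : ((a + s : ℝ) : AddCircle (1:ℝ)) = (a : AddCircle (1:ℝ)) + (s : ℝ) :=
    AddCircle.coe_add (p := 1) a s
  have h2 : ((α * (a + s) : ℝ) : AddCircle (1:ℝ)) = ((α*a : ℝ) : AddCircle (1:ℝ)) + ((α*s : ℝ)) := by
    rw [mul_add]; exact AddCircle.coe_add (p := 1) _ _
  unfold torusFlow
  simp only [Prod.mk_add_mk, Prod.mk.injEq]
  exact ⟨h1, h2⟩

lemma flow_sub (α a s : ℝ) : torusFlow α (a - s) = torusFlow α a - torusFlow α s := by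
  have h1 : ((a - s : ℝ) : AddCircle (1:ℝ)) = (a : AddCircle (1:ℝ)) - (s : ℝ) :=
    AddCircle.coe_sub (p := 1) a s
  have h2 : ((α * (a - s) : ℝ) : AddCircle (1:ℝ)) = ((α*a : ℝ) : AddCircle (1:ℝ)) - ((α*s : ℝ)) := by
    rw [mul_sub]; exact AddCircle.coe_sub (p := 1) _ _
  unfold torusFlow
  simp only [Prod.mk_sub_mk, Prod.mk.injEq]
  exact ⟨h1, h2⟩

lemma flow_dist_le (α t s : ℝ) :
    dist (torusFlow α t) (torusFlow α s) ≤ (1 + |α|) * |t - s| := by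
  rw [Prod.dist_eq]
  apply max_le
  · calc dist ((t:ℝ) : AddCircle (1:ℝ)) ((s:ℝ) : AddCircle (1:ℝ)) ≤ |t - s| := dist_coe_le _ _
      _ ≤ (1 + |α|) * |t - s| := by nlinarith [abs_nonneg α, abs_nonneg (t-s)]
  · calc dist ((α*t:ℝ) : AddCircle (1:ℝ)) ((α*s:ℝ) : AddCircle (1:ℝ)) ≤ |α*t - α*s| := dist_coe_le _ _
      _ = |α| * |t - s| := by rw [← abs_mul]; ring_nf
      _ ≤ (1 + |α|) * |t - s| := by nlinarith [abs_nonneg (t-s)]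

lemma chain_of_steps {X : Type*} (r : X → X → Prop) (c : ℕ → X) :
    ∀ n : ℕ, (∀ k < n, r (c k) (c (k+1))) → Relation.ReflTransGen r (c 0) (c n) := by
  intro n
  induction n with
  | zero => intro _; exact Relation.ReflTransGen.refl
  | succ m ih =>
      intro h
      exact (ih fun k hk => h k (by omega)).tail (h m (by omega))

lemma local_to_global (f : ℝ → ℝ) (finj : Function.Injective f) (c : ℝ) (hc : 0 < c)
    (h : ∀ t s : ℝ, |t - s| ≤ c → |f t - f s| = |t - s|) :
    ∀ t s : ℝ, |f t - f s| = |t - s| := by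
  have key : ∀ n : ℕ, ∀ t s : ℝ, |t - s| ≤ 2 ^ n * c → |f t - f s| = |t - s| := by
    intro n
    induction n with
    | zero => intro t s hts; exact h t s (by simpa using hts)
    | succ m ih =>
        intro t s hts
        rcases eq_or_ne t s with rfl | hne
        · simp
        have hpow : (2:ℝ) ^ (m+1) = 2 * 2 ^ m := by ring
        set m₀ := (t + s) / 2 with hm
        have hd : t - m₀ = (t - s)/2 := by rw [hm]; ring
        have hd2 : m₀ - s = (t - s)/2 := by rw [hm]; ring
        have habs2 : |(t-s)/2| = |t-s|/2 := by rw [abs_div]; norm_num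
        have h1 : |t - m₀| ≤ 2 ^ m * c := by rw [hd, habs2]; rw [hpow] at hts; linarith
        have h2 : |m₀ - s| ≤ 2 ^ m * c := by rw [hd2, habs2]; rw [hpow] at hts; linarith
        have e1 := ih t m₀ h1
        have e2 := ih m₀ s h2
        rw [hd, habs2] at e1
        rw [hd2, habs2] at e2
        set r := |t - s|/2 with hrr
        have hr0 : 0 ≤ r := by positivity
        have hfne : f t ≠ f s := fun hh => hne (finj hh)
        have ht' := (abs_eq hr0).mp e1
        have hs' := (abs_eq hr0).mp e2
        have hfin : |f t - f s| = 2 * r := by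
          rcases ht' with h3 | h3 <;> rcases hs' with h4 | h4
          · rw [abs_eq (by linarith)]; left; linarith
          · exfalso; apply hfne; linarith
          · exfalso; apply hfne; linarith
          · rw [abs_eq (by linarith)]; right; linarith
        rw [hfin, hrr]; ring
  intro t s
  obtain ⟨n, hn⟩ := pow_unbounded_of_one_lt (|t - s| / c) (by norm_num : (1:ℝ) < 2)
  exact key n t s (by rw [div_lt_iff₀ hc] at hn; linarith)

lemma real_iso_classify (f : ℝ → ℝ) (h : ∀ t s : ℝ, |f t - f s| = |t - s|) :
    (∀ t, f t = t + f 0) ∨ (∀ t, f t = f 0 - t) := by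
  set g : ℝ → ℝ := fun t => f t - f 0 with hg
  have habs : ∀ t, |g t| = |t| := by intro t; simpa [hg] using h t 0
  have hmul : ∀ t s, g t * g s = t * s := by
    intro t s
    have hds : |g t - g s| = |t - s| := by simpa [hg, sub_sub_sub_cancel_right] using h t s
    have h1 : (g t - g s)^2 = (t - s)^2 := by
      rw [← sq_abs (g t - g s), ← sq_abs (t - s), hds]
    have h2 : (g t)^2 = t^2 := by rw [← sq_abs (g t), ← sq_abs t, habs t]
    have h3 : (g s)^2 = s^2 := by rw [← sq_abs (g s), ← sq_abs s, habs s]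
    nlinarith [h1, h2, h3]
  have hone : g 1 = 1 ∨ g 1 = -1 := by
    have hz : (g 1 - 1) * (g 1 + 1) = 0 := by nlinarith [hmul 1 1]
    rcases mul_eq_zero.mp hz with h' | h'
    · left; linarith
    · right; linarith
  rcases hone with h1 | h1
  · left; intro t
    have ht := hmul t 1
    rw [h1, mul_one, mul_one] at ht
    simp only [hg] at ht
    linarith
  · right; intro t
    have ht := hmul t 1
    rw [h1, mul_one] at ht
    simp only [hg] at ht
    linarith

lemma flow_dense (α : ℝ) (hα : Irrational α) (z : T2) {ε : ℝ} (hε : 0 < ε) :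
    ∃ t : ℝ, dist (torusFlow α t) z < ε := by
  obtain ⟨x', hx⟩ : ∃ x : ℝ, (x : AddCircle (1:ℝ)) = z.1 := Quotient.exists_rep z.1
  obtain ⟨y', hy⟩ : ∃ y : ℝ, (y : AddCircle (1:ℝ)) = z.2 := Quotient.exists_rep z.2
  set S : AddSubgroup ℝ := AddSubgroup.closure {1, α} with hS
  have hdense : Dense (S : Set ℝ) := by
    rcases S.dense_or_cyclic with h | ⟨a, ha⟩
    · exact h
    · exfalso
      have h1 : (1:ℝ) ∈ S := AddSubgroup.subset_closure (by simp)
      have h2 : α ∈ S := AddSubgroup.subset_closure (by simp)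
      rw [ha, ← AddSubgroup.zmultiples_eq_closure] at h1 h2
      obtain ⟨n, hn⟩ := AddSubgroup.mem_zmultiples_iff.mp h1
      obtain ⟨m, hm⟩ := AddSubgroup.mem_zmultiples_iff.mp h2
      have hn0 : (n:ℝ) ≠ 0 := by
        intro h0
        rw [zsmul_eq_mul, h0, zero_mul] at hn
        norm_num at hn
      apply hα
      refine ⟨(m : ℚ)/(n : ℚ), ?_⟩
      rw [zsmul_eq_mul] at hn hm
      have : a = 1 / n := by field_simp at hn ⊢; linarith
      rw [this] at hm
      push_cast
      rw [← hm]; field_simp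
  have hmem := hdense (y' - α * x')
  rw [mem_closure_iff] at hmem
  obtain ⟨s, hs, hsS⟩ := hmem (Metric.ball (y' - α * x') ε) Metric.isOpen_ball
    (Metric.mem_ball_self hε)
  have hsS' : s ∈ AddSubgroup.closure ({1, α} : Set ℝ) := hsS
  obtain ⟨k, m, hkm⟩ := AddSubgroup.mem_closure_pair.mp hsS'
  refine ⟨x' + m, ?_⟩
  have hc1 : ((x' + (m:ℝ) : ℝ) : AddCircle (1:ℝ)) = (x' : AddCircle (1:ℝ)) := coe_add_int x' m
  have hc2 : dist ((α * (x' + (m:ℝ)) : ℝ) : AddCircle (1:ℝ)) z.2 < ε := by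
    rw [← hy, dist_eq_norm, ← AddCircle.coe_sub]
    have hc3 : ((α * (x' + (m:ℝ)) - y' + k : ℝ) : AddCircle (1:ℝ))
        = ((α * (x' + (m:ℝ)) - y' : ℝ) : AddCircle (1:ℝ)) := coe_add_int _ k
    have hval : α * (x' + (m:ℝ)) - y' + k = s - (y' - α * x') := by
      rw [← hkm]; push_cast [zsmul_eq_mul]; ring
    calc ‖((α * (x' + (m:ℝ)) - y' : ℝ) : AddCircle (1:ℝ))‖
        = ‖((α * (x' + (m:ℝ)) - y' + k : ℝ) : AddCircle (1:ℝ))‖ := by rw [hc3]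
      _ ≤ |α * (x' + (m:ℝ)) - y' + k| := norm_coe_le _
      _ < ε := by
          rw [hval]
          rw [Metric.mem_ball, Real.dist_eq] at hs
          exact hs
  rw [Prod.dist_eq]
  unfold torusFlow
  apply max_lt
  · show dist (((x' + (m:ℝ) : ℝ)) : AddCircle (1:ℝ)) z.1 < ε
    rw [hc1, hx]
    simpa using hε
  · exact hc2

end TorusAux

/-- every surjective isometry `φ` of the torus example `X = 𝕋 ∪ H`
is, for some `a ∈ ℝ`, either the translation `φ(y) = g(a) + y`,
`φ(g(t), t) = (g(t+a), t+a)`, or the reflection `φ(y) = g(2a) - y`,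
`φ(g(t), t) = (g(2a-t), 2a-t)`. -/
theorem torus_isometry_classification (α : ℝ) (hα : Irrational α)
    (R M : ℝ) (hM : 0 < M) (hRM : M ≤ 2 * R)
    (φ : torusX α → torusX α) (hφsurj : Function.Surjective φ)
    (hφiso : ∀ p q : torusX α, zdist R M (φ p).1 (φ q).1 = zdist R M p.1 q.1) :
    ∃ a : ℝ,
      ((∀ y : T2, (φ ⟨Sum.inl y, memT α y⟩).1 = Sum.inl (torusFlow α a + y)) ∧
        (∀ t : ℝ, (φ ⟨Sum.inr (torusFlow α t, t), memH α t⟩).1 =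
            Sum.inr (torusFlow α (t + a), t + a))) ∨
      ((∀ y : T2, (φ ⟨Sum.inl y, memT α y⟩).1 = Sum.inl (torusFlow α (2 * a) - y)) ∧
        (∀ t : ℝ, (φ ⟨Sum.inr (torusFlow α t, t), memH α t⟩).1 =
            Sum.inr (torusFlow α (2 * a - t), 2 * a - t))) := by

  classical
  have hR : 0 < R := by linarith
  open TorusAux in
  -- every element of X is either a torus point or a flow point
  have hform : ∀ x : torusX α,
      (∃ y : T2, x.1 = Sum.inl y) ∨ (∃ t : ℝ, x.1 = Sum.inr (torusFlow α t, t)) := by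
    intro x
    rcases x.2 with ⟨y, hy⟩ | ⟨t, ht⟩
    · exact Or.inl ⟨y, hy⟩
    · exact Or.inr ⟨t, ht⟩
  -- the chain relation
  set r : torusX α → torusX α → Prop := fun x y => zdist R M x.1 y.1 < R with hrdef
  set C : torusX α → torusX α → Prop := Relation.ReflTransGen r with hCdef
  have hstep : ∀ x y : torusX α, r x y →
      ((∃ u, x.1 = Sum.inl u) ↔ ∃ u, y.1 = Sum.inl u) := by
    intro x y hr
    simp only [hrdef] at hr
    rcases hx : x.1 with u | p <;> rcases hy : y.1 with v | q
    · simp [hx, hy]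
    · exfalso
      rw [hx, hy, zdist_lr] at hr
      have := dist_nonneg (x := u) (y := q.1)
      linarith
    · exfalso
      rw [hx, hy, zdist_rl] at hr
      have := dist_nonneg (x := p.1) (y := v)
      linarith
    · simp [hx, hy]
  have hchain : ∀ x y : torusX α, C x y →
      ((∃ u, x.1 = Sum.inl u) ↔ ∃ u, y.1 = Sum.inl u) := by
    intro x y hxy
    simp only [hCdef] at hxy
    induction hxy with
    | refl => exact Iff.rfl
    | tail hab hbc ih => exact ih.trans (hstep _ _ hbc)
  -- the image of a chain under φ is a chain
  have hφchain : ∀ x y : torusX α, C x y → C (φ x) (φ y) := by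
    intro x y hxy
    simp only [hCdef] at hxy ⊢
    exact Relation.ReflTransGen.lift φ (fun a b hab => by
      simp only [hrdef, Function.onFun] at hab ⊢
      rw [hφiso a b]; exact hab) _ _ hxy
  -- connectivity of the torus part
  have connL : ∀ y y' : T2, C ⟨Sum.inl y, memT α y⟩ ⟨Sum.inl y', memT α y'⟩ := by
    intro y y'
    obtain ⟨p, hp⟩ : ∃ p : ℝ, (p : AddCircle (1:ℝ)) = y.1 := Quotient.exists_rep y.1
    obtain ⟨q, hq⟩ : ∃ q : ℝ, (q : AddCircle (1:ℝ)) = y.2 := Quotient.exists_rep y.2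
    obtain ⟨p', hp'⟩ : ∃ p' : ℝ, (p' : AddCircle (1:ℝ)) = y'.1 := Quotient.exists_rep y'.1
    obtain ⟨q', hq'⟩ : ∃ q' : ℝ, (q' : AddCircle (1:ℝ)) = y'.2 := Quotient.exists_rep y'.2
    obtain ⟨n, hn⟩ := exists_nat_gt ((|p' - p| + |q' - q|)/R + 1)
    have hpos : 0 ≤ (|p' - p| + |q' - q|)/R := by positivity
    have hn0 : (0:ℝ) < n := by linarith
    have hsum : |p' - p|/R + |q' - q|/R + 1 < n := by
      rw [← add_div]; exact hn
    have hp0 : 0 ≤ |p' - p|/R := by positivity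
    have hq0 : 0 ≤ |q' - q|/R := by positivity
    have hb1 : |p' - p| < n * R := by
      have h' : |p' - p|/R < n := by linarith
      calc |p' - p| = (|p' - p|/R) * R := by field_simp
        _ < n * R := mul_lt_mul_of_pos_right h' hR
    have hb2 : |q' - q| < n * R := by
      have h' : |q' - q|/R < n := by linarith
      calc |q' - q| = (|q' - q|/R) * R := by field_simp
        _ < n * R := mul_lt_mul_of_pos_right h' hR
    have hbound1 : |p' - p|/n < R := (div_lt_iff₀ hn0).mpr (by linarith)
    have hbound2 : |q' - q|/n < R := (div_lt_iff₀ hn0).mpr (by linarith)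
    set c : ℕ → torusX α := fun k =>
      ⟨Sum.inl (((p + k * (p'-p) / n : ℝ) : AddCircle (1:ℝ)),
                ((q + k * (q'-q) / n : ℝ) : AddCircle (1:ℝ))), memT α _⟩ with hcdef
    have h0 : c 0 = ⟨Sum.inl y, memT α y⟩ := by
      apply Subtype.ext
      simp only [hcdef]
      simp only [Nat.cast_zero, zero_mul, zero_div, add_zero]
      rw [hp, hq]
    have hcn : c n = ⟨Sum.inl y', memT α y'⟩ := by
      apply Subtype.ext
      simp only [hcdef]
      have e1 : p + (n:ℝ) * (p'-p) / n = p' := by field_simp; ring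
      have e2 : q + (n:ℝ) * (q'-q) / n = q' := by field_simp; ring
      rw [e1, e2, hp', hq']
    have hsteps : ∀ k < n, r (c k) (c (k+1)) := by
      intro k hk
      simp only [hrdef, hcdef]
      simp only [zdist_ll]
      rw [Prod.dist_eq]
      apply max_lt
      · refine lt_of_le_of_lt (TorusAux.dist_coe_le _ _) ?_
        have e : (p + (k:ℝ) * (p'-p) / n) - (p + ((k:ℝ)+1) * (p'-p) / n) = -((p'-p)/n) := by
          ring
        rw [show ((k+1 : ℕ) : ℝ) = (k:ℝ)+1 by push_cast; ring, e, abs_neg, abs_div,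
          abs_of_pos hn0]
        exact hbound1
      · refine lt_of_le_of_lt (TorusAux.dist_coe_le _ _) ?_
        have e : (q + (k:ℝ) * (q'-q) / n) - (q + ((k:ℝ)+1) * (q'-q) / n) = -((q'-q)/n) := by
          ring
        rw [show ((k+1 : ℕ) : ℝ) = (k:ℝ)+1 by push_cast; ring, e, abs_neg, abs_div,
          abs_of_pos hn0]
        exact hbound2
    have := TorusAux.chain_of_steps r c n hsteps
    rw [h0, hcn] at this
    simp only [hCdef]
    exact this
  -- connectivity of the flow part
  have connH : ∀ t s : ℝ,
      C ⟨Sum.inr (torusFlow α t, t), memH α t⟩ ⟨Sum.inr (torusFlow α s, s), memH α s⟩ := by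
    intro t s
    obtain ⟨n, hn⟩ := exists_nat_gt ((2 + |α|) * |s - t| / R + 1)
    have hpos : 0 ≤ (2 + |α|) * |s - t| / R := by positivity
    have hn0 : (0:ℝ) < n := by linarith
    have hbound : (2 + |α|) * (|s - t|/n) < R := by
      rw [show (2 + |α|) * (|s - t|/n) = ((2 + |α|) * |s - t|)/n by ring, div_lt_iff₀ hn0]
      have h' : (2 + |α|) * |s - t| / R < n := by linarith
      have hb : (2 + |α|) * |s - t| < n * R := by
        calc (2 + |α|) * |s - t| = ((2 + |α|) * |s - t| / R) * R := by field_simp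
          _ < n * R := mul_lt_mul_of_pos_right h' hR
      linarith
    set c : ℕ → torusX α := fun k =>
      ⟨Sum.inr (torusFlow α (t + k * (s-t) / n), t + k * (s-t) / n), memH α _⟩ with hcdef
    have h0 : c 0 = ⟨Sum.inr (torusFlow α t, t), memH α t⟩ := by
      apply Subtype.ext
      simp only [hcdef]
      norm_num
    have hcn : c n = ⟨Sum.inr (torusFlow α s, s), memH α s⟩ := by
      apply Subtype.ext
      simp only [hcdef]
      have e : t + (n:ℝ) * (s-t) / n = s := by field_simp; ring
      simp only [e]
    have hsteps : ∀ k < n, r (c k) (c (k+1)) := by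
      intro k hk
      simp only [hrdef, hcdef]
      simp only [zdist_rr]
      have e : (t + (k:ℝ) * (s-t) / n) - (t + ((k:ℝ)+1) * (s-t) / n) = -((s-t)/n) := by
        ring
      have ek : ((k+1 : ℕ) : ℝ) = (k:ℝ)+1 := by push_cast; ring
      have habs : |(t + (k:ℝ) * (s-t) / n) - (t + (((k:ℕ)+1 : ℕ):ℝ) * (s-t) / n)|
          = |s - t|/n := by
        rw [ek, e, abs_neg, abs_div, abs_of_pos hn0]
      calc dist (torusFlow α (t + (k:ℝ) * (s-t) / n)) (torusFlow α (t + (((k:ℕ)+1 : ℕ):ℝ) * (s-t) / n))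
            + min |(t + (k:ℝ) * (s-t) / n) - (t + (((k:ℕ)+1 : ℕ):ℝ) * (s-t) / n)| M
          ≤ (1 + |α|) * |(t + (k:ℝ) * (s-t) / n) - (t + (((k:ℕ)+1 : ℕ):ℝ) * (s-t) / n)|
            + |(t + (k:ℝ) * (s-t) / n) - (t + (((k:ℕ)+1 : ℕ):ℝ) * (s-t) / n)| := by
            have h1 := TorusAux.flow_dist_le α (t + (k:ℝ) * (s-t) / n)
              (t + (((k:ℕ)+1 : ℕ):ℝ) * (s-t) / n)
            have h2 := min_le_left |(t + (k:ℝ) * (s-t) / n)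
              - (t + (((k:ℕ)+1 : ℕ):ℝ) * (s-t) / n)| M
            linarith
        _ = (2 + |α|) * (|s - t|/n) := by rw [habs]; ring
        _ < R := hbound
    have := TorusAux.chain_of_steps r c n hsteps
    rw [h0, hcn] at this
    simp only [hCdef]
    exact this
  -- x0 and h0 base points
  -- all torus points have images of the same kind, similarly for flow points
  have imgL : ∀ y y' : T2,
      ((∃ u, (φ ⟨Sum.inl y, memT α y⟩).1 = Sum.inl u) ↔
       (∃ u, (φ ⟨Sum.inl y', memT α y'⟩).1 = Sum.inl u)) := by
    intro y y'
    exact hchain _ _ (hφchain _ _ (connL y y'))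
  have imgH : ∀ t s : ℝ,
      ((∃ u, (φ ⟨Sum.inr (torusFlow α t, t), memH α t⟩).1 = Sum.inl u) ↔
       (∃ u, (φ ⟨Sum.inr (torusFlow α s, s), memH α s⟩).1 = Sum.inl u)) := by
    intro t s
    exact hchain _ _ (hφchain _ _ (connH t s))
  -- now the dichotomy
  have notInlH : ∀ t : ℝ, ¬ (∃ u, (Sum.inr (torusFlow α t, t) : T2 ⊕ T2 × ℝ) = Sum.inl u) := by
    rintro t ⟨u, hu⟩; cases hu
  have main : (∀ y : T2, ∃ u, (φ ⟨Sum.inl y, memT α y⟩).1 = Sum.inl u) ∧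
      (∀ t : ℝ, ¬ ∃ u, (φ ⟨Sum.inr (torusFlow α t, t), memH α t⟩).1 = Sum.inl u) := by
    by_cases hA : ∃ u, (φ ⟨Sum.inl 0, memT α 0⟩).1 = Sum.inl u
    · by_cases hB : ∃ u, (φ ⟨Sum.inr (torusFlow α 0, 0), memH α 0⟩).1 = Sum.inl u
      · -- everything maps to inl: contradiction with surjectivity
        exfalso
        obtain ⟨w, hw⟩ := hφsurj ⟨Sum.inr (torusFlow α 0, 0), memH α 0⟩
        have : ∃ u, (φ w).1 = Sum.inl u := by
          rcases hform w with ⟨y, hy⟩ | ⟨t, ht⟩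
          · have hw' : w = ⟨Sum.inl y, memT α y⟩ := Subtype.ext hy
            rw [hw']
            exact (imgL y 0).mpr hA
          · have hw' : w = ⟨Sum.inr (torusFlow α t, t), memH α t⟩ := Subtype.ext ht
            rw [hw']
            exact (imgH t 0).mpr hB
        rw [hw] at this
        exact notInlH 0 this
      · exact ⟨fun y => (imgL y 0).mpr hA, fun t ht => hB ((imgH 0 t).mpr ht)⟩
    · exfalso
      by_cases hB : ∃ u, (φ ⟨Sum.inr (torusFlow α 0, 0), memH α 0⟩).1 = Sum.inl u
      · -- torus ↦ flow and flow ↦ torus: contradiction via diameters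
        set t2 : ℝ := (⌈M⌉ : ℝ) + 1/2 with ht2
        have hMceil : M ≤ (⌈M⌉ : ℝ) := Int.le_ceil M
        have ht2M : M ≤ |t2 - 0| := by
          rw [sub_zero, ht2, abs_of_pos (by linarith)]
          linarith
        -- distance between the two flow points is ≥ 1/2 + M
        have hfar : (1:ℝ)/2 + M ≤ zdist R M
            (Sum.inr (torusFlow α 0, 0) : T2 ⊕ T2 × ℝ) (Sum.inr (torusFlow α t2, t2)) := by
          rw [zdist_rr]
          have hmin : min |(0:ℝ) - t2| M = M := by
            rw [abs_sub_comm]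
            exact min_eq_right ht2M
          have hdist : (1:ℝ)/2 ≤ dist (torusFlow α 0) (torusFlow α t2) := by
            rw [Prod.dist_eq]
            refine le_trans ?_ (le_max_left _ _)
            show (1:ℝ)/2 ≤ dist (((0:ℝ) : AddCircle (1:ℝ))) ((t2 : AddCircle (1:ℝ)))
            have : ((t2 : ℝ) : AddCircle (1:ℝ)) = (((1:ℝ)/2 : ℝ) : AddCircle (1:ℝ)) := by
              rw [ht2, add_comm]
              exact TorusAux.coe_add_int (1/2) ⌈M⌉
            rw [this, dist_comm, dist_eq_norm,
              show ((0:ℝ) : AddCircle (1:ℝ)) = 0 by simp, sub_zero]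
            have hhp := AddCircle.norm_half_period_eq (p := (1:ℝ))
            simp only [abs_one] at hhp
            rw [hhp]
          show (1:ℝ)/2 + M ≤ dist (torusFlow α 0, (0:ℝ)).1 (torusFlow α t2, t2).1
            + min |(torusFlow α 0, (0:ℝ)).2 - (torusFlow α t2, t2).2| M
          rw [hmin]
          linarith
        -- but both flow points map to torus points which are at distance ≤ 1/2
        have hB2 : ∃ u, (φ ⟨Sum.inr (torusFlow α t2, t2), memH α t2⟩).1 = Sum.inl u :=
          (imgH 0 t2).mp hB
        obtain ⟨u0, hu0⟩ := hB
        obtain ⟨u2, hu2⟩ := hB2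
        have := hφiso ⟨Sum.inr (torusFlow α 0, 0), memH α 0⟩
          ⟨Sum.inr (torusFlow α t2, t2), memH α t2⟩
        rw [hu0, hu2, zdist_ll] at this
        have hle := TorusAux.T2_dist_le_half u0 u2
        simp only [] at hfar this
        rw [this] at hle
        linarith
      · -- everything maps to inr: contradiction with surjectivity
        obtain ⟨w, hw⟩ := hφsurj ⟨Sum.inl 0, memT α 0⟩
        have : ¬ ∃ u, (φ w).1 = Sum.inl u := by
          rcases hform w with ⟨y, hy⟩ | ⟨t, ht⟩
          · have hw' : w = ⟨Sum.inl y, memT α y⟩ := Subtype.ext hy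
            rw [hw']
            exact fun h => hA ((imgL 0 y).mpr h)
          · have hw' : w = ⟨Sum.inr (torusFlow α t, t), memH α t⟩ := Subtype.ext ht
            rw [hw']
            exact fun h => hB ((imgH 0 t).mpr h)
        rw [hw] at this
        exact this ⟨0, rfl⟩
  obtain ⟨mainL, mainH⟩ := main
  -- extract Φ and f
  have hL : ∀ y : T2, ∃ y' : T2, (φ ⟨Sum.inl y, memT α y⟩).1 = Sum.inl y' := mainL
  have hH : ∀ t : ℝ, ∃ s : ℝ,
      (φ ⟨Sum.inr (torusFlow α t, t), memH α t⟩).1 = Sum.inr (torusFlow α s, s) := by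
    intro t
    rcases hform (φ ⟨Sum.inr (torusFlow α t, t), memH α t⟩) with ⟨y, hy⟩ | ⟨s, hs⟩
    · exact absurd ⟨y, hy⟩ (mainH t)
    · exact ⟨s, hs⟩
  set Φ : T2 → T2 := fun y => (hL y).choose with hΦdef
  set f : ℝ → ℝ := fun t => (hH t).choose with hfdef
  have hΦspec : ∀ y : T2, (φ ⟨Sum.inl y, memT α y⟩).1 = Sum.inl (Φ y) := fun y => (hL y).choose_spec
  have hfspec : ∀ t : ℝ, (φ ⟨Sum.inr (torusFlow α t, t), memH α t⟩).1
      = Sum.inr (torusFlow α (f t), f t) := fun t => (hH t).choose_spec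
  -- Φ is an isometry of the torus
  have eΦ : ∀ y y' : T2, dist (Φ y) (Φ y') = dist y y' := by
    intro y y'
    have := hφiso ⟨Sum.inl y, memT α y⟩ ⟨Sum.inl y', memT α y'⟩
    rw [hΦspec y, hΦspec y', zdist_ll, zdist_ll] at this
    exact this
  -- Φ agrees with f on the flow
  have hΦg : ∀ t : ℝ, Φ (torusFlow α t) = torusFlow α (f t) := by
    intro t
    have := hφiso ⟨Sum.inl (torusFlow α t), memT α _⟩ ⟨Sum.inr (torusFlow α t, t), memH α t⟩
    rw [hΦspec _, hfspec t, zdist_lr, zdist_lr] at this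
    simp only [dist_self] at this
    have hd : dist (Φ (torusFlow α t)) (torusFlow α (f t)) = 0 := by linarith
    exact dist_eq_zero.mp hd
  -- the min-equation for f
  have eMin : ∀ t s : ℝ, min |f t - f s| M = min |t - s| M := by
    intro t s
    have := hφiso ⟨Sum.inr (torusFlow α t, t), memH α t⟩ ⟨Sum.inr (torusFlow α s, s), memH α s⟩
    rw [hfspec t, hfspec s, zdist_rr, zdist_rr] at this
    simp only [] at this
    have hdd : dist (torusFlow α (f t)) (torusFlow α (f s)) = dist (torusFlow α t) (torusFlow α s) := by
      rw [← hΦg t, ← hΦg s]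
      exact eΦ _ _
    rw [hdd] at this
    linarith
  -- f is injective
  have finj : Function.Injective f := by
    intro t s hts
    have := eMin t s
    rw [hts, sub_self, abs_zero, min_eq_left hM.le] at this
    have habs : |t - s| = 0 := by
      rcases le_or_gt M |t - s| with h' | h'
      · rw [min_eq_right h'] at this; linarith
      · rw [min_eq_left h'.le] at this; linarith
    have := abs_eq_zero.mp habs
    linarith
  -- f is a local isometry
  have floc : ∀ t s : ℝ, |t - s| ≤ M/2 → |f t - f s| = |t - s| := by
    intro t s hts
    have h1 := eMin t s
    rw [min_eq_left (by linarith : |t - s| ≤ M)] at h1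
    rcases le_or_gt M |f t - f s| with h' | h'
    · rw [min_eq_right h'] at h1; linarith
    · rw [min_eq_left h'.le] at h1; exact h1
  have fglob := TorusAux.local_to_global f finj (M/2) (by linarith) floc
  rcases TorusAux.real_iso_classify f fglob with hcase | hcase
  · -- translation
    refine ⟨f 0, Or.inl ⟨?_, ?_⟩⟩
    · -- Φ y = g a + y
      have hΦcont : Continuous Φ := (Isometry.of_dist_eq eΦ).continuous
      have h2cont : Continuous (fun y : T2 => torusFlow α (f 0) + y) :=
        continuous_const.add continuous_id
      have hdense : Dense (Set.range (torusFlow α)) := by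
        rw [Metric.dense_iff]
        intro z ε hε
        obtain ⟨t, ht⟩ := TorusAux.flow_dense α hα z hε
        exact ⟨torusFlow α t, by rwa [Metric.mem_ball], Set.mem_range_self t⟩
      have heq : Φ = fun y : T2 => torusFlow α (f 0) + y := by
        apply Continuous.ext_on hdense hΦcont h2cont
        rintro _ ⟨s, rfl⟩
        rw [hΦg s, hcase s, add_comm s (f 0), TorusAux.flow_add]
      intro y
      rw [hΦspec y, heq]
    · intro t
      rw [hfspec t, hcase t]
  · -- reflection
    refine ⟨f 0 / 2, Or.inr ⟨?_, ?_⟩⟩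
    · have hΦcont : Continuous Φ := (Isometry.of_dist_eq eΦ).continuous
      have h2cont : Continuous (fun y : T2 => torusFlow α (2 * (f 0 / 2)) - y) :=
        continuous_const.sub continuous_id
      have hdense : Dense (Set.range (torusFlow α)) := by
        rw [Metric.dense_iff]
        intro z ε hε
        obtain ⟨t, ht⟩ := TorusAux.flow_dense α hα z hε
        exact ⟨torusFlow α t, by rwa [Metric.mem_ball], Set.mem_range_self t⟩
      have heq : Φ = fun y : T2 => torusFlow α (2 * (f 0 / 2)) - y := by
        apply Continuous.ext_on hdense hΦcont h2cont
        rintro _ ⟨s, rfl⟩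
        rw [hΦg s, hcase s, show f 0 - s = 2 * (f 0 / 2) - s by ring, TorusAux.flow_sub]
      intro y
      rw [hΦspec y, heq]
    · intro t
      rw [hfspec t, hcase t, show f 0 - t = 2 * (f 0 / 2) - t by ring]
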